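/- Lower bound on the inner-cluster connectivity (Proposition G.3): Suppose Assumption 2(A,B) holds for δ, K, M_1,…,M_K with δ + λ ≥ 0, and suppose there exists c > 0 such that c·P_+(M_i × M_i) ≤ P_X(M_i)² for every i ∈ {1,…,K}, with P_+(M_i×M_i) > 0 and P_X(M_i) > 0. Then for every measurable f : X → S^{d−1}, every ω ∈ ℝ^d, and g(x) := ω⊤f(x), and every i: (1/P_+(M_i×M_i))·∫_{M_i×M_i} (g(x) − g(x'))² w(x,x') dν(x)dν(x') ≥ c(δ+λ) · (1/P_X(M_i)²)·∫_{M_i×M_i} (g(x) − g(x'))² w(x)w(x') dν(x)dν(x'); that is, Q_{M_i}(g) ≥ c(δ+λ). -/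

import Mathlib

open MeasureTheory
open scoped RealInnerProductSpace ENNReal

noncomputable section

namespace KCLStatement18

variable {X : Type*} [MeasurableSpace X]

/-- The marginal density `w(x) := ∫ w(x,x') dν(x')`. -/
def marg (ν : Measure X) (w : X → X → ℝ) (x : X) : ℝ := ∫ x', w x x' ∂ν

/-- The similarity function `sim(x,x';λ) := w(x,x')/(w(x)w(x')) − λ`. -/
def simFun (ν : Measure X) (w : X → X → ℝ) (lam : ℝ) (x x' : X) : ℝ :=
  w x x' / (marg ν w x * marg ν w x') - lam

/-- **Lower bound on the inner-cluster connectivity (Proposition G.3).**  Under Assumption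
2(A,B) with `δ + λ ≥ 0`, if `c > 0` satisfies `c·P₊(Mᵢ×Mᵢ) ≤ P_X(Mᵢ)²` for every `i`, then
for every measurable `f : X → S^{d−1}`, every `ω ∈ ℝ^d` and `g := ω⊤f(·)`, and every `i`,
`(1/P₊(Mᵢ×Mᵢ))·∫_{Mᵢ×Mᵢ} (g(x)−g(x'))² w(x,x')
  ≥ c(δ+λ)·(1/P_X(Mᵢ)²)·∫_{Mᵢ×Mᵢ} (g(x)−g(x'))² w(x)w(x')`, i.e. `Q_{Mᵢ}(g) ≥ c(δ+λ)`. -/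
theorem inner_cluster_connectivity_lower_bound
    {X : Type*} [MeasurableSpace X] {d : ℕ}
    (ν : Measure X) [SigmaFinite ν]
    (w : X → X → ℝ)
    (hwmeas : Measurable (Function.uncurry w))
    (hwnn : ∀ x x', 0 ≤ w x x')
    (hwint : Integrable (fun p : X × X => w p.1 p.2) (ν.prod ν))
    (hwone : ∫ p, w p.1 p.2 ∂(ν.prod ν) = 1)
    (hmint : Integrable (marg ν w) ν)
    (hmpos : ∀ x, 0 < marg ν w x)
    (lam : ℝ) (hlam : 0 ≤ lam)
    -- Assumption 2(A,B)
    (K : ℕ) (δ : ℝ) (M : Fin K → Set X)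
    (hMmeas : ∀ i, MeasurableSet (M i))
    (hcover : (⋃ i, M i) = Set.univ)
    (hsim : ∀ i : Fin K, ∀ x ∈ M i, ∀ x' ∈ M i, δ ≤ simFun ν w lam x x')
    (hdl : 0 ≤ δ + lam)
    -- the constant `c`
    (c : ℝ) (hc : 0 < c)
    (hPpos : ∀ i : Fin K, 0 < ∫ p in M i ×ˢ M i, w p.1 p.2 ∂(ν.prod ν))
    (hPXpos : ∀ i : Fin K, 0 < ∫ x in M i, marg ν w x ∂ν)
    (hcP : ∀ i : Fin K, c * ∫ p in M i ×ˢ M i, w p.1 p.2 ∂(ν.prod ν) ≤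
      (∫ x in M i, marg ν w x ∂ν) ^ 2)
    -- the encoder and the linear head
    (f : X → EuclideanSpace ℝ (Fin d)) (hf : Measurable f) (hfs : ∀ x, ‖f x‖ = 1)
    (ω : EuclideanSpace ℝ (Fin d)) :
    ∀ i : Fin K,
      c * (δ + lam) * ((∫ x in M i, marg ν w x ∂ν) ^ 2)⁻¹ *
          ∫ x in M i, ∫ x' in M i,
            ((⟪ω, f x⟫ : ℝ) - (⟪ω, f x'⟫ : ℝ)) ^ 2 * (marg ν w x * marg ν w x') ∂ν ∂ν ≤
        (∫ p in M i ×ˢ M i, w p.1 p.2 ∂(ν.prod ν))⁻¹ *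
          ∫ x in M i, ∫ x' in M i,
            ((⟪ω, f x⟫ : ℝ) - (⟪ω, f x'⟫ : ℝ)) ^ 2 * w x x' ∂ν ∂ν := by
  intro i
  -- abbreviations
  have hBmeas : Measurable (fun p : X × X => ((⟪ω, f p.1⟫ : ℝ) - (⟪ω, f p.2⟫ : ℝ)) ^ 2) := by
    apply Measurable.pow_const
    exact ((measurable_const.inner (hf.comp measurable_fst)).sub
      (measurable_const.inner (hf.comp measurable_snd)))
  have hBnn : ∀ p : X × X, 0 ≤ ((⟪ω, f p.1⟫ : ℝ) - (⟪ω, f p.2⟫ : ℝ)) ^ 2 := fun p => sq_nonneg _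
  have hBbdd : ∀ p : X × X, ‖((⟪ω, f p.1⟫ : ℝ) - (⟪ω, f p.2⟫ : ℝ)) ^ 2‖ ≤ (2 * ‖ω‖) ^ 2 := by
    intro p
    have hx : ∀ y : X, |(⟪ω, f y⟫ : ℝ)| ≤ ‖ω‖ := by
      intro y
      calc |(⟪ω, f y⟫ : ℝ)| ≤ ‖ω‖ * ‖f y‖ := abs_real_inner_le_norm _ _
        _ = ‖ω‖ := by rw [hfs]; ring
    have h1 : |(⟪ω, f p.1⟫ : ℝ) - (⟪ω, f p.2⟫ : ℝ)| ≤ 2 * ‖ω‖ := by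
      calc |(⟪ω, f p.1⟫ : ℝ) - (⟪ω, f p.2⟫ : ℝ)|
          ≤ |(⟪ω, f p.1⟫ : ℝ)| + |(⟪ω, f p.2⟫ : ℝ)| := abs_sub _ _
        _ ≤ 2 * ‖ω‖ := by have := hx p.1; have := hx p.2; linarith
    rw [Real.norm_eq_abs, abs_of_nonneg (hBnn p), ← sq_abs]
    exact pow_le_pow_left₀ (abs_nonneg _) h1 2
  set μ := (ν.prod ν).restrict (M i ×ˢ M i) with hμdef
  have hμ : (ν.restrict (M i)).prod (ν.restrict (M i)) = μ := Measure.prod_restrict _ _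
  have hwI : Integrable (fun p : X × X => w p.1 p.2) μ := hwint.restrict
  have hmmI : Integrable (fun p : X × X => marg ν w p.1 * marg ν w p.2) μ :=
    (hmint.mul_prod hmint).restrict
  have hBw : Integrable (fun p : X × X =>
      ((⟪ω, f p.1⟫ : ℝ) - (⟪ω, f p.2⟫ : ℝ)) ^ 2 * w p.1 p.2) μ :=
    hwI.bdd_mul hBmeas.aestronglyMeasurable (Filter.Eventually.of_forall hBbdd)
  have hBmm : Integrable (fun p : X × X =>
      ((⟪ω, f p.1⟫ : ℝ) - (⟪ω, f p.2⟫ : ℝ)) ^ 2 * (marg ν w p.1 * marg ν w p.2)) μ :=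
    hmmI.bdd_mul hBmeas.aestronglyMeasurable (Filter.Eventually.of_forall hBbdd)
  -- rewrite iterated integrals as integrals over μ
  have hiter1 : (∫ x in M i, ∫ x' in M i,
        ((⟪ω, f x⟫ : ℝ) - (⟪ω, f x'⟫ : ℝ)) ^ 2 * w x x' ∂ν ∂ν)
      = ∫ p, ((⟪ω, f p.1⟫ : ℝ) - (⟪ω, f p.2⟫ : ℝ)) ^ 2 * w p.1 p.2 ∂μ := by
    rw [← hμ]
    exact integral_integral (by rwa [hμ])
  have hiter2 : (∫ x in M i, ∫ x' in M i,
        ((⟪ω, f x⟫ : ℝ) - (⟪ω, f x'⟫ : ℝ)) ^ 2 * (marg ν w x * marg ν w x') ∂ν ∂ν)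
      = ∫ p, ((⟪ω, f p.1⟫ : ℝ) - (⟪ω, f p.2⟫ : ℝ)) ^ 2 * (marg ν w p.1 * marg ν w p.2) ∂μ := by
    rw [← hμ]
    exact integral_integral (by rwa [hμ])
  -- pointwise comparison
  have hpt : ∀ᵐ p ∂μ, (δ + lam) * (((⟪ω, f p.1⟫ : ℝ) - (⟪ω, f p.2⟫ : ℝ)) ^ 2 *
      (marg ν w p.1 * marg ν w p.2)) ≤ ((⟪ω, f p.1⟫ : ℝ) - (⟪ω, f p.2⟫ : ℝ)) ^ 2 * w p.1 p.2 := by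
    rw [hμdef, ae_restrict_iff' ((hMmeas i).prod (hMmeas i))]
    filter_upwards with p hp
    obtain ⟨h1, h2⟩ := hp
    have hm : 0 < marg ν w p.1 * marg ν w p.2 := mul_pos (hmpos _) (hmpos _)
    have hs := hsim i p.1 h1 p.2 h2
    have hw' : (δ + lam) * (marg ν w p.1 * marg ν w p.2) ≤ w p.1 p.2 := by
      rw [← le_div_iff₀ hm]
      have : δ ≤ w p.1 p.2 / (marg ν w p.1 * marg ν w p.2) - lam := hs
      linarith
    calc (δ + lam) * (((⟪ω, f p.1⟫ : ℝ) - (⟪ω, f p.2⟫ : ℝ)) ^ 2 *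
          (marg ν w p.1 * marg ν w p.2))
        = ((⟪ω, f p.1⟫ : ℝ) - (⟪ω, f p.2⟫ : ℝ)) ^ 2 *
          ((δ + lam) * (marg ν w p.1 * marg ν w p.2)) := by ring
      _ ≤ ((⟪ω, f p.1⟫ : ℝ) - (⟪ω, f p.2⟫ : ℝ)) ^ 2 * w p.1 p.2 :=
          mul_le_mul_of_nonneg_left hw' (hBnn p)
  have hAW : (δ + lam) *
      ∫ p, ((⟪ω, f p.1⟫ : ℝ) - (⟪ω, f p.2⟫ : ℝ)) ^ 2 * (marg ν w p.1 * marg ν w p.2) ∂μ ≤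
      ∫ p, ((⟪ω, f p.1⟫ : ℝ) - (⟪ω, f p.2⟫ : ℝ)) ^ 2 * w p.1 p.2 ∂μ := by
    rw [← integral_const_mul]
    exact integral_mono_ae (hBmm.const_mul _) hBw hpt
  have hAnn : 0 ≤ ∫ p, ((⟪ω, f p.1⟫ : ℝ) - (⟪ω, f p.2⟫ : ℝ)) ^ 2 *
      (marg ν w p.1 * marg ν w p.2) ∂μ :=
    integral_nonneg fun p => mul_nonneg (hBnn p) (mul_pos (hmpos _) (hmpos _)).le
  have hP := hPpos i
  have hPX := hPXpos i
  have hcle : c * ((∫ x in M i, marg ν w x ∂ν) ^ 2)⁻¹ ≤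
      (∫ p in M i ×ˢ M i, w p.1 p.2 ∂(ν.prod ν))⁻¹ := by
    rw [← div_eq_mul_inv, inv_eq_one_div, div_le_div_iff₀ (by positivity) hP]
    have := hcP i
    linarith
  rw [hiter1, hiter2]
  have hPμ : (∫ p in M i ×ˢ M i, w p.1 p.2 ∂(ν.prod ν)) =
      ∫ p, w p.1 p.2 ∂μ := rfl
  calc c * (δ + lam) * ((∫ x in M i, marg ν w x ∂ν) ^ 2)⁻¹ *
        ∫ p, ((⟪ω, f p.1⟫ : ℝ) - (⟪ω, f p.2⟫ : ℝ)) ^ 2 * (marg ν w p.1 * marg ν w p.2) ∂μ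
      = (c * ((∫ x in M i, marg ν w x ∂ν) ^ 2)⁻¹) * ((δ + lam) *
        ∫ p, ((⟪ω, f p.1⟫ : ℝ) - (⟪ω, f p.2⟫ : ℝ)) ^ 2 * (marg ν w p.1 * marg ν w p.2) ∂μ) := by
        ring
    _ ≤ (∫ p in M i ×ˢ M i, w p.1 p.2 ∂(ν.prod ν))⁻¹ * ((δ + lam) *
        ∫ p, ((⟪ω, f p.1⟫ : ℝ) - (⟪ω, f p.2⟫ : ℝ)) ^ 2 * (marg ν w p.1 * marg ν w p.2) ∂μ) :=
        mul_le_mul_of_nonneg_right hcle (mul_nonneg hdl hAnn)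
    _ ≤ (∫ p in M i ×ˢ M i, w p.1 p.2 ∂(ν.prod ν))⁻¹ *
        ∫ p, ((⟪ω, f p.1⟫ : ℝ) - (⟪ω, f p.2⟫ : ℝ)) ^ 2 * w p.1 p.2 ∂μ :=
        mul_le_mul_of_nonneg_left hAW (inv_nonneg.2 hP.le)


end KCLStatement18
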